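/- arXiv:1712.08435 — 6 statements merged into one kernel-verified Lean document; each statement's English description precedes it below -/
import Mathlib

section
/- Let c = sqrt(π/2). The set D = {z ∈ ℂ : |Re(z) − Im(z)| < c − (1/c)·Re(z)·Im(z)} equals the union of the three sets {z : |Re(z)| < c and |Im(z)| < c}, {z : Re(z) > c and Im(z) < −c}, and {z : Re(z) < −c and Im(z) > c}. -/
open Real

theorem region_D_decomposition :
    {z : ℂ | |z.re - z.im| < Real.sqrt (π / 2) -
        (1 / Real.sqrt (π / 2)) * z.re * z.im} =
      {z : ℂ | |z.re| < Real.sqrt (π / 2) ∧ |z.im| < Real.sqrt (π / 2)} ∪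
      {z : ℂ | z.re > Real.sqrt (π / 2) ∧ z.im < -Real.sqrt (π / 2)} ∪
      {z : ℂ | z.re < -Real.sqrt (π / 2) ∧ z.im > Real.sqrt (π / 2)} := by
  ext z
  simp only [Set.mem_setOf_eq, Set.mem_union, abs_lt]
  set c := Real.sqrt (π / 2) with hcdef
  set x := z.re
  set y := z.im
  have hc : 0 < c := Real.sqrt_pos.mpr (by positivity)
  have key : c * (1 / c * x * y) = x * y := by field_simp
  constructor
  · rintro ⟨h1, h2⟩
    have h1' := mul_lt_mul_of_pos_left h1 hc
    have h2' := mul_lt_mul_of_pos_left h2 hc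
    have H1 : (c + x) * (c - y) > 0 := by nlinarith
    have H2 : (c - x) * (c + y) > 0 := by nlinarith
    rcases lt_trichotomy x c with hx | hx | hx
    · rcases lt_trichotomy x (-c) with hx2 | hx2 | hx2
      · right
        refine ⟨hx2, ?_⟩
        nlinarith
      · exfalso; nlinarith
      · left; left
        have hy1 : y < c := by nlinarith
        have hy2 : -c < y := by nlinarith
        exact ⟨⟨hx2, hx⟩, hy2, hy1⟩
    · exfalso; nlinarith
    · left; right
      refine ⟨hx, ?_⟩
      nlinarith
  · rintro ((⟨⟨hx1, hx2⟩, hy1, hy2⟩ | ⟨hx, hy⟩) | ⟨hx, hy⟩) <;>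
    constructor <;>
    · rw [← mul_lt_mul_iff_right₀ hc]; nlinarith
end

section
/- For real x with |x| < sqrt(π/2), the inequality |x − y| < sqrt(π/2) − sqrt(2/π)·x·y holds for a real number y if and only if |y| < sqrt(π/2). -/
open Real

theorem region_inner_square (x y : ℝ) (hx : |x| < Real.sqrt (π / 2)) :
    |x - y| < Real.sqrt (π / 2) - Real.sqrt (2 / π) * x * y ↔
      |y| < Real.sqrt (π / 2) := by
  have hpi := Real.pi_pos
  set a := Real.sqrt (π / 2) with ha_def
  set b := Real.sqrt (2 / π) with hb_def
  have ha : 0 < a := Real.sqrt_pos.mpr (by positivity)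
  have hb : 0 < b := Real.sqrt_pos.mpr (by positivity)
  have hmul : b * a = 1 := by
    rw [ha_def, hb_def, ← Real.sqrt_mul (by positivity)]
    rw [show 2 / π * (π / 2) = 1 by field_simp]
    exact Real.sqrt_one
  rw [abs_lt] at hx
  rw [abs_lt, abs_lt]
  obtain ⟨hx1, hx2⟩ := hx
  have hp : 0 < 1 + b * x := by nlinarith
  have hm : 0 < 1 - b * x := by nlinarith
  constructor
  · rintro ⟨h1, h2⟩
    constructor
    · by_contra h
      push_neg at h
      nlinarith [mul_nonneg (by linarith : (0:ℝ) ≤ -a - y) hp.le]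
    · by_contra h
      push_neg at h
      nlinarith [mul_nonneg (by linarith : (0:ℝ) ≤ y - a) hp.le]
  · rintro ⟨h1, h2⟩
    constructor
    · nlinarith [mul_pos (by linarith : (0:ℝ) < y + a) hp]
    · nlinarith [mul_pos (by linarith : (0:ℝ) < a - y) hp]
end

section
/- For positive real numbers a, b with ab = 1, sqrt(a)·(1/(2a) − Σ_{n=1}^∞ e^{−πa²n²}) = sqrt(b)·(1/(2b) − Σ_{n=1}^∞ e^{−πb²n²}). -/
open Real

lemma psi_summable (c : ℝ) (hc : 0 < c) :
    Summable fun n : ℕ ↦ Real.exp (-π * c * ((n : ℝ) + 1) ^ 2) := by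
  have hgeo : Summable fun n : ℕ ↦ Real.exp (-π * c) ^ (n + 1) := by
    have h1 : Real.exp (-π * c) < 1 := by
      rw [Real.exp_lt_one_iff]
      nlinarith [Real.pi_pos]
    exact ((summable_geometric_of_lt_one (Real.exp_pos _).le h1).mul_right _).congr
      (fun n => by rw [pow_succ])
  apply Summable.of_nonneg_of_le (fun n => (Real.exp_pos _).le) (fun n => ?_) hgeo
  rw [← Real.exp_nat_mul]
  apply Real.exp_le_exp.mpr
  have h0 : ((n : ℝ) + 1) ≤ ((n : ℝ) + 1) ^ 2 := by nlinarith [Nat.cast_nonneg (α := ℝ) n]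
  have h1 := mul_le_mul_of_nonneg_left h0 (mul_pos Real.pi_pos hc).le
  push_cast
  nlinarith [h1]

set_option maxHeartbeats 1000000 in
lemma int_sum_eq (c : ℝ) (hc : 0 < c) :
    ∑' n : ℤ, Real.exp (-π * c * (n : ℝ) ^ 2) =
      1 + 2 * ∑' n : ℕ, Real.exp (-π * c * ((n : ℝ) + 1) ^ 2) := by
  have hs := psi_summable c hc
  have h1 : Summable fun n : ℕ ↦ Real.exp (-π * c * (((n : ℤ) + 1 : ℤ) : ℝ) ^ 2) := by
    apply hs.congr; intro n; push_cast; ring_nf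
  have h2 : Summable fun n : ℕ ↦ Real.exp (-π * c * ((-((n : ℤ) + 1) : ℤ) : ℝ) ^ 2) := by
    apply hs.congr; intro n; push_cast; ring_nf
  rw [tsum_of_add_one_of_neg_add_one (f := fun n : ℤ ↦ Real.exp (-π * c * (n : ℝ) ^ 2)) h1 h2]
  have e1 : (fun n : ℕ ↦ Real.exp (-π * c * (((n : ℤ) + 1 : ℤ) : ℝ) ^ 2)) =
      fun n : ℕ ↦ Real.exp (-π * c * ((n : ℝ) + 1) ^ 2) := by
    funext n; push_cast; ring_nf
  have e2 : (fun n : ℕ ↦ Real.exp (-π * c * ((-((n : ℤ) + 1) : ℤ) : ℝ) ^ 2)) =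
      fun n : ℕ ↦ Real.exp (-π * c * ((n : ℝ) + 1) ^ 2) := by
    funext n; push_cast; ring_nf
  rw [e1, e2]
  norm_num
  ring

theorem theta_transformation_ab (a b : ℝ) (ha : 0 < a) (hb : 0 < b)
    (hab : a * b = 1) :
    Real.sqrt a * (1 / (2 * a) - ∑' n : ℕ, Real.exp (-π * a ^ 2 * ((n : ℝ) + 1) ^ 2)) =
      Real.sqrt b * (1 / (2 * b) - ∑' n : ℕ, Real.exp (-π * b ^ 2 * ((n : ℝ) + 1) ^ 2)) := by
  have ha2 : (0:ℝ) < a ^ 2 := by positivity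
  have key := Real.tsum_exp_neg_mul_int_sq ha2
  have hba : b = 1 / a := by field_simp; linarith [hab]
  have hdiv : -π / a ^ 2 = -π * b ^ 2 := by
    rw [hba]; field_simp
  have hpow : ((a ^ 2 : ℝ)) ^ ((1:ℝ)/2) = a := by
    rw [← Real.rpow_natCast a 2, ← Real.rpow_mul ha.le]
    norm_num
  have hSa := int_sum_eq (a ^ 2) ha2
  have hSb := int_sum_eq (b ^ 2) (by positivity)
  rw [hdiv, hSa, hSb, hpow] at key
  have hsa : Real.sqrt a * Real.sqrt a = a := Real.mul_self_sqrt ha.le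
  have hsb : Real.sqrt b * Real.sqrt b = b := Real.mul_self_sqrt hb.le
  have hsab : Real.sqrt a * Real.sqrt b = 1 := by
    rw [← Real.sqrt_mul ha.le, hab, Real.sqrt_one]
  have hsa0 : Real.sqrt a ≠ 0 := by positivity
  have hsb0 : Real.sqrt b ≠ 0 := by positivity
  set Sa := ∑' n : ℕ, Real.exp (-π * a ^ 2 * ((n : ℝ) + 1) ^ 2)
  set Sb := ∑' n : ℕ, Real.exp (-π * b ^ 2 * ((n : ℝ) + 1) ^ 2)
  have htb : Real.sqrt b = 1 / Real.sqrt a := by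
    field_simp
    rw [← Real.sqrt_mul hb.le, mul_comm b a, hab, Real.sqrt_one]
  rw [htb, hba]
  field_simp at key ⊢
  linear_combination (1 - 2 * a * Sa) * hsa - a * key
end

section
/- For any complex number z and positive real numbers a, b with ab = 1, sqrt(a)·(e^{−z²/8}/(2a) − e^{z²/8}·Σ_{n=1}^∞ e^{−πa²n²}·cos(sqrt(π)·a·n·z)) = sqrt(b)·(e^{z²/8}/(2b) − e^{−z²/8}·Σ_{n=1}^∞ e^{−πb²n²}·cosh(sqrt(π)·b·n·z)). -/
open Real Complex

lemma hasSum_nat_theta2 (z : ℂ) {τ : ℂ} (hτ : 0 < im τ) :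
    HasSum (fun n : ℕ => Complex.exp (π * I * ((n : ℂ) + 1) ^ 2 * τ) *
        (2 * Complex.cos (2 * π * ((n : ℂ) + 1) * z)))
      (jacobiTheta₂ z τ - 1) := by
  have h := (hasSum_jacobiTheta₂_term z hτ).nat_add_neg
  rw [← hasSum_nat_add_iff' 1] at h
  simp_rw [jacobiTheta₂_term, Finset.sum_range_one, Nat.cast_zero, Int.cast_zero, neg_zero,
    Int.cast_zero] at h
  norm_num at h
  rw [show jacobiTheta₂ z τ + 1 - 2 = jacobiTheta₂ z τ - 1 by ring] at h
  convert h using 2 with n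
  · rfl
  rw [Complex.cos, mul_comm (2 : ℂ), div_mul_cancel₀ _ (two_ne_zero' ℂ), mul_add,
    ← Complex.exp_add, ← Complex.exp_add]
  congr 1 <;> · congr 1; ring

lemma hasSum_cos_theta2 (z : ℂ) {a : ℝ} (ha : 0 < a) :
    HasSum (fun n : ℕ => Complex.exp (-(π : ℂ) * (a : ℂ) ^ 2 * ((n : ℂ) + 1) ^ 2) *
        Complex.cos ((Real.sqrt π : ℂ) * (a : ℂ) * ((n : ℂ) + 1) * z))
      ((jacobiTheta₂ ((a : ℂ) * z / (2 * (Real.sqrt π : ℂ))) ((a : ℂ) ^ 2 * I) - 1) / 2) := by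
  have him : 0 < im ((a : ℂ) ^ 2 * I) := by
    simp [← Complex.ofReal_pow, pow_pos ha]
  have hs : (Real.sqrt π : ℂ) * (Real.sqrt π : ℂ) = (π : ℂ) := by
    rw [← Complex.ofReal_mul, Real.mul_self_sqrt Real.pi_pos.le]
  have hs0 : (Real.sqrt π : ℂ) ≠ 0 := by
    simpa using (Real.sqrt_pos.mpr Real.pi_pos).ne'
  have h := (hasSum_nat_theta2 ((a : ℂ) * z / (2 * (Real.sqrt π : ℂ))) him).div_const 2
  convert h using 2 with n
  · rfl
  rw [mul_comm (2 : ℂ), mul_div_assoc, mul_div_cancel_right₀ _ (two_ne_zero' ℂ)]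
  congr 1
  · congr 1
    linear_combination (-(π : ℂ) * (a : ℂ) ^ 2 * ((n : ℂ) + 1) ^ 2) * Complex.I_sq
  · congr 1
    field_simp
    linear_combination ((a : ℂ) * z) * hs

lemma hasSum_cosh_theta2 (z : ℂ) {b : ℝ} (hb : 0 < b) :
    HasSum (fun n : ℕ => Complex.exp (-(π : ℂ) * (b : ℂ) ^ 2 * ((n : ℂ) + 1) ^ 2) *
        Complex.cosh ((Real.sqrt π : ℂ) * (b : ℂ) * ((n : ℂ) + 1) * z))
      ((jacobiTheta₂ (-I * (b : ℂ) * z / (2 * (Real.sqrt π : ℂ))) ((b : ℂ) ^ 2 * I) - 1) / 2) := by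
  have him : 0 < im ((b : ℂ) ^ 2 * I) := by
    simp [← Complex.ofReal_pow, pow_pos hb]
  have hs : (Real.sqrt π : ℂ) * (Real.sqrt π : ℂ) = (π : ℂ) := by
    rw [← Complex.ofReal_mul, Real.mul_self_sqrt Real.pi_pos.le]
  have hs0 : (Real.sqrt π : ℂ) ≠ 0 := by
    simpa using (Real.sqrt_pos.mpr Real.pi_pos).ne'
  have h := (hasSum_nat_theta2 (-I * (b : ℂ) * z / (2 * (Real.sqrt π : ℂ))) him).div_const 2
  convert h using 2 with n
  · rfl
  rw [mul_comm (2 : ℂ), mul_div_assoc, mul_div_cancel_right₀ _ (two_ne_zero' ℂ)]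
  congr 1
  · congr 1
    linear_combination (-(π : ℂ) * (b : ℂ) ^ 2 * ((n : ℂ) + 1) ^ 2) * Complex.I_sq
  · rw [show 2 * (π : ℂ) * ((n : ℂ) + 1) * (-I * (b : ℂ) * z / (2 * (Real.sqrt π : ℂ)))
        = -((Real.sqrt π : ℂ) * (b : ℂ) * ((n : ℂ) + 1) * z * I) by
      field_simp
      linear_combination ((b : ℂ) * z) * hs]
    rw [Complex.cos_neg, Complex.cos_mul_I]


theorem general_theta_transformation (z : ℂ) (a b : ℝ) (ha : 0 < a) (hb : 0 < b)
    (hab : a * b = 1) :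
    (Real.sqrt a : ℂ) *
        (Complex.exp (-z ^ 2 / 8) / (2 * (a : ℂ)) -
          Complex.exp (z ^ 2 / 8) *
            ∑' n : ℕ, Complex.exp (-(π : ℂ) * (a : ℂ) ^ 2 * ((n : ℂ) + 1) ^ 2) *
              Complex.cos ((Real.sqrt π : ℂ) * (a : ℂ) * ((n : ℂ) + 1) * z)) =
      (Real.sqrt b : ℂ) *
        (Complex.exp (z ^ 2 / 8) / (2 * (b : ℂ)) -
          Complex.exp (-z ^ 2 / 8) *
            ∑' n : ℕ, Complex.exp (-(π : ℂ) * (b : ℂ) ^ 2 * ((n : ℂ) + 1) ^ 2) *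
              Complex.cosh ((Real.sqrt π : ℂ) * (b : ℂ) * ((n : ℂ) + 1) * z)) := by
  have hA : (a : ℂ) ≠ 0 := Complex.ofReal_ne_zero.mpr ha.ne'
  have hB : (b : ℂ) ≠ 0 := Complex.ofReal_ne_zero.mpr hb.ne'
  have hs0 : (Real.sqrt π : ℂ) ≠ 0 := by
    simpa using (Real.sqrt_pos.mpr Real.pi_pos).ne'
  have hs : (Real.sqrt π : ℂ) * (Real.sqrt π : ℂ) = (π : ℂ) := by
    rw [← Complex.ofReal_mul, Real.mul_self_sqrt Real.pi_pos.le]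
  have hab' : (a : ℂ) * (b : ℂ) = 1 := by
    rw [← Complex.ofReal_mul, hab, Complex.ofReal_one]
  have hu : (Real.sqrt a : ℂ) * (Real.sqrt a : ℂ) = (a : ℂ) := by
    rw [← Complex.ofReal_mul, Real.mul_self_sqrt ha.le]
  have hv : (Real.sqrt b : ℂ) * (Real.sqrt b : ℂ) = (b : ℂ) := by
    rw [← Complex.ofReal_mul, Real.mul_self_sqrt hb.le]
  have huv : (Real.sqrt a : ℂ) * (Real.sqrt b : ℂ) = 1 := by
    rw [← Complex.ofReal_mul, ← Real.sqrt_mul ha.le, hab, Real.sqrt_one, Complex.ofReal_one]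
  rw [(hasSum_cos_theta2 z ha).tsum_eq, (hasSum_cosh_theta2 z hb).tsum_eq]
  have key := jacobiTheta₂_functional_equation ((a : ℂ) * z / (2 * (Real.sqrt π : ℂ)))
    ((a : ℂ) ^ 2 * I)
  have e1 : -I * ((a : ℂ) ^ 2 * I) = ((a ^ 2 : ℝ) : ℂ) := by
    push_cast; linear_combination (-(a : ℂ) ^ 2) * Complex.I_sq
  have e2 : (((a ^ 2 : ℝ) : ℂ)) ^ (1 / 2 : ℂ) = (a : ℂ) := by
    rw [show (1 / 2 : ℂ) = ((1 / 2 : ℝ) : ℂ) by norm_num,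
      ← Complex.ofReal_cpow (sq_nonneg a), ← Real.sqrt_eq_rpow, Real.sqrt_sq ha.le]
  have e3 : -(π : ℂ) * I * ((a : ℂ) * z / (2 * (Real.sqrt π : ℂ))) ^ 2 / ((a : ℂ) ^ 2 * I)
      = -z ^ 2 / 4 := by
    rw [div_eq_div_iff (by simp [hA, I_ne_zero]) (by norm_num)]
    field_simp
    linear_combination (4 * z ^ 2) * hs
  have e4 : ((a : ℂ) * z / (2 * (Real.sqrt π : ℂ))) / ((a : ℂ) ^ 2 * I)
      = -I * (b : ℂ) * z / (2 * (Real.sqrt π : ℂ)) := by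
    rw [div_div, div_eq_div_iff (by simp [hA, I_ne_zero, hs0]) (by simp [hs0])]
    linear_combination (2 * (Real.sqrt π : ℂ) * (a : ℂ) ^ 2 * (b : ℂ) * z) * Complex.I_sq +
      (-(2 * (Real.sqrt π : ℂ) * (a : ℂ) * z)) * hab'
  have e5 : -1 / ((a : ℂ) ^ 2 * I) = (b : ℂ) ^ 2 * I := by
    rw [div_eq_iff (by simp [hA, I_ne_zero])]
    linear_combination ((a : ℂ) * (b : ℂ) + 1) * hab' + (-(a : ℂ) ^ 2 * (b : ℂ) ^ 2) * Complex.I_sq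
  rw [e1, e2, e3, e4, e5] at key
  rw [key]
  have hPE : Complex.exp (z ^ 2 / 8) * Complex.exp (-z ^ 2 / 4) = Complex.exp (-z ^ 2 / 8) := by
    rw [← Complex.exp_add]; congr 1; ring
  have hPM : Complex.exp (z ^ 2 / 8) * Complex.exp (-z ^ 2 / 8) = 1 := by
    rw [← Complex.exp_add, show z ^ 2 / 8 + -z ^ 2 / 8 = 0 by ring, Complex.exp_zero]
  rw [show -I * (b : ℂ) * z = -(I * (b : ℂ) * z) by ring]
  set θ := jacobiTheta₂ (-(I * (b : ℂ) * z) / (2 * (Real.sqrt π : ℂ))) ((b : ℂ) ^ 2 * I) with hθ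
  set u := (Real.sqrt a : ℂ)
  set v := (Real.sqrt b : ℂ)
  set P := Complex.exp (z ^ 2 / 8)
  set M := Complex.exp (-z ^ 2 / 8)
  have hia : (a : ℂ)⁻¹ = (b : ℂ) := inv_eq_of_mul_eq_one_right hab'
  have hib : (b : ℂ)⁻¹ = (a : ℂ) := inv_eq_of_mul_eq_one_left hab'
  have hub : u * (b : ℂ) = v := by linear_combination (-u) * hv + v * huv
  have hva : v * (a : ℂ) = u := by linear_combination (-v) * hu + u * huv
  linear_combination (u * M / 2 - u * P * Complex.exp (-z ^ 2 / 4) * θ / 2) * hia +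
    (-v * P / 2) * hib + (-u * θ * (b : ℂ) / 2) * hPE + (M / 2 - M * θ / 2) * hub - (P / 2) * hva
end

section
/- Define ψ(x, z) = Σ_{n=1}^∞ e^{−πn²x}·cos(sqrt(πx)·n·z) for Re(x) > 0 and z ∈ ℂ. Then ψ(x, z) = (e^{−z²/4}/sqrt(x))·ψ(1/x, i·z) + e^{−z²/4}/(2·sqrt(x)) − 1/2 for all real x > 0. -/
open Real Complex

noncomputable def psiTheta (x z : ℂ) : ℂ :=
  ∑' n : ℕ, Complex.exp (-(π : ℂ) * ((n : ℂ) + 1) ^ 2 * x) *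
    Complex.cos (((π : ℂ) * x) ^ (1 / 2 : ℂ) * ((n : ℂ) + 1) * z)

lemma ofReal_cpow_half (a : ℝ) (ha : 0 ≤ a) :
    ((a : ℂ)) ^ (1 / 2 : ℂ) = (Real.sqrt a : ℂ) := by
  rw [show (1 / 2 : ℂ) = ((1 / 2 : ℝ) : ℂ) by norm_num, ← Complex.ofReal_cpow ha,
    Real.sqrt_eq_rpow]

lemma jacobi_eq_one_add_psi (x : ℝ) (hx : 0 < x) (z : ℂ) :
    jacobiTheta₂ ((Real.sqrt (π * x) : ℂ) * z / (2 * π)) (I * x) = 1 + 2 * psiTheta x z := by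
  set w : ℂ := (Real.sqrt (π * x) : ℂ) * z / (2 * π) with hw
  have hτ : 0 < (I * (x : ℂ)).im := by simpa using hx
  have h := (hasSum_jacobiTheta₂_term w hτ).nat_add_neg
  rw [← hasSum_nat_add_iff' 1] at h
  have h0 : jacobiTheta₂_term 0 w (I * x) = 1 := by
    simp [jacobiTheta₂_term]
  have hπ : (π : ℂ) ≠ 0 := by exact_mod_cast Real.pi_ne_zero
  have hfun : ∀ n : ℕ,
      jacobiTheta₂_term ((n : ℤ) + 1) w (I * x) + jacobiTheta₂_term (-((n : ℤ) + 1)) w (I * x)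
        = 2 * (Complex.exp (-(π : ℂ) * ((n : ℂ) + 1) ^ 2 * x) *
            Complex.cos (((π : ℂ) * x) ^ (1 / 2 : ℂ) * ((n : ℂ) + 1) * z)) := by
    intro n
    rw [show ((π : ℂ) * x) = (((π * x : ℝ)) : ℂ) by push_cast; ring,
      ofReal_cpow_half _ (by positivity)]
    have E1 : 2 * (π : ℂ) * I * (((n : ℂ)) + 1) * w + (π : ℂ) * I * (((n : ℂ)) + 1) ^ 2 * (I * x)
        = -(π : ℂ) * ((n : ℂ) + 1) ^ 2 * x
          + ((Real.sqrt (π * x) : ℂ) * ((n : ℂ) + 1) * z) * I := by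
      rw [hw]
      field_simp
      ring_nf
      simp only [Complex.I_sq]
      ring
    have E2 : 2 * (π : ℂ) * I * (-(((n : ℂ)) + 1)) * w + (π : ℂ) * I * (-(((n : ℂ)) + 1)) ^ 2 * (I * x)
        = -(π : ℂ) * ((n : ℂ) + 1) ^ 2 * x
          + (-((Real.sqrt (π * x) : ℂ) * ((n : ℂ) + 1) * z)) * I := by
      rw [hw]
      field_simp
      ring_nf
      simp only [Complex.I_sq]
      ring
    simp only [jacobiTheta₂_term, Complex.cos, Int.cast_neg, Int.cast_add, Int.cast_one,
      Int.cast_natCast]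
    rw [E1, E2, Complex.exp_add, Complex.exp_add]
    ring
  norm_num [h0] at h
  have h2 : HasSum (fun n : ℕ => 2 * (Complex.exp (-(π : ℂ) * ((n : ℂ) + 1) ^ 2 * x) *
      Complex.cos (((π : ℂ) * x) ^ (1 / 2 : ℂ) * ((n : ℂ) + 1) * z)))
      (jacobiTheta₂ w (I * x) + 1 - 2) := by
    refine h.congr_fun fun n => ?_
    rw [show (-1 + -(n : ℤ)) = -((n : ℤ) + 1) by ring]
    exact (hfun n).symm
  have := (h2.div_const 2).tsum_eq
  simp only [mul_div_cancel_left₀ _ (two_ne_zero' ℂ)] at this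
  rw [psiTheta, this]
  ring

theorem psi_transformation (x : ℝ) (hx : 0 < x) (z : ℂ) :
    psiTheta (x : ℂ) z =
      Complex.exp (-z ^ 2 / 4) / (Real.sqrt x : ℂ) * psiTheta (1 / (x : ℂ)) (Complex.I * z) +
        Complex.exp (-z ^ 2 / 4) / (2 * (Real.sqrt x : ℂ)) - 1 / 2 := by
  have hπ : (π : ℂ) ≠ 0 := by exact_mod_cast Real.pi_ne_zero
  have hx0 : (x : ℂ) ≠ 0 := by exact_mod_cast hx.ne'
  have hs : (Real.sqrt x : ℂ) ≠ 0 := by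
    exact_mod_cast (Real.sqrt_pos.mpr hx).ne'
  have hA := jacobi_eq_one_add_psi x hx z
  have hB := jacobi_eq_one_add_psi (1 / x) (by positivity) (I * z)
  have hFE := jacobiTheta₂_functional_equation ((Real.sqrt (π * x) : ℂ) * z / (2 * π)) (I * x)
  have e1 : -I * (I * (x : ℂ)) = (x : ℂ) := by
    rw [← mul_assoc, neg_mul, Complex.I_mul_I, neg_neg, one_mul]
  have e2 : ((x : ℂ)) ^ (1 / 2 : ℂ) = (Real.sqrt x : ℂ) := ofReal_cpow_half x hx.le
  have hsq : ((Real.sqrt (π * x) : ℂ)) ^ 2 = (π : ℂ) * x := by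
    rw [← Complex.ofReal_pow, Real.sq_sqrt (by positivity)]
    push_cast
    ring
  have e3 : -(π : ℂ) * I * ((Real.sqrt (π * x) : ℂ) * z / (2 * π)) ^ 2 / (I * x) = -z ^ 2 / 4 := by
    rw [div_pow, mul_pow, hsq]
    rw [div_eq_div_iff (by simp [Complex.I_ne_zero, hx0, hπ]) (by norm_num : (4 : ℂ) ≠ 0)]
    field_simp
    ring_nf
  have e4 : (Real.sqrt (π * x) : ℂ) * z / (2 * π) / (I * x)
      = -((Real.sqrt (π * (1 / x)) : ℂ) * (I * z) / (2 * π)) := by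
    have hs2 : Real.sqrt (π * x) = Real.sqrt (π * (1 / x)) * x := by
      rw [← Real.sqrt_sq hx.le, ← Real.sqrt_mul (by positivity), sq]
      congr 1
      field_simp
      ring
      exact Real.sq_sqrt (sq_nonneg x)
    rw [hs2]
    push_cast
    rw [div_div, div_eq_iff (by simp [Complex.I_ne_zero, hx0, hπ])]
    field_simp
    ring_nf
    simp only [Complex.I_sq]
    ring
  have e5 : -1 / (I * (x : ℂ)) = I * ((1 : ℂ) / x) := by
    rw [div_eq_iff (by simp [Complex.I_ne_zero, hx0])]
    have : I * ((1 : ℂ) / x) * (I * x) = I * I * (x / x) := by ring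
    rw [this, Complex.I_mul_I, div_self hx0]
    ring
  rw [e1, e2, e3, e4, e5, jacobiTheta₂_neg_left, hA] at hFE
  rw [show (I * ((1 : ℂ) / x)) = (I * (((1 / x : ℝ)) : ℂ)) by push_cast; ring] at hFE
  rw [hB] at hFE
  have h2 : (1 : ℂ) + 2 * psiTheta (x : ℂ) z =
      Complex.exp (-z ^ 2 / 4) / (Real.sqrt x : ℂ) *
        (1 + 2 * psiTheta (((1 / x : ℝ)) : ℂ) (I * z)) := by
    rw [hFE]; ring
  have hcast : psiTheta (((1 / x : ℝ)) : ℂ) (I * z) = psiTheta (1 / (x : ℂ)) (I * z) := by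
    norm_num
  rw [hcast] at h2
  have hkey : psiTheta (x : ℂ) z =
      (Complex.exp (-z ^ 2 / 4) / (Real.sqrt x : ℂ) *
        (1 + 2 * psiTheta (1 / (x : ℂ)) (I * z)) - 1) / 2 := by
    rw [← h2]; ring
  rw [hkey]
  field_simp
  ring
end

section
/- Let ψ(x, z) = Σ_{n=1}^∞ e^{−πn²x}·cos(sqrt(πx)·n·z). For δ > 0 real and z complex, ψ(i + δ, z) = 2·ψ(4δ, (sqrt(i+δ)/sqrt(δ))·z) − ψ(δ, (sqrt(i+δ)/sqrt(δ))·z). -/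
open Real Complex

private lemma sq_half (x : ℂ) : (x ^ (1 / 2 : ℂ)) ^ 2 = x := by
  rw [one_div]
  exact Complex.cpow_ofNat_inv_pow x 2

private lemma re_half_pos {x : ℂ} (hx : 0 < x.re) : 0 < (x ^ (1 / 2 : ℂ)).re := by
  rw [one_div, Complex.cpow_inv_two_re]
  apply Real.sqrt_pos.2
  have := norm_nonneg x
  positivity

private lemma ofReal_half_pow {t : ℝ} (ht : 0 ≤ t) :
    ((t : ℂ)) ^ (1 / 2 : ℂ) = ((Real.sqrt t : ℝ) : ℂ) := by
  rw [Real.sqrt_eq_rpow, Complex.ofReal_cpow ht]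
  norm_num

private lemma norm_cos_le' (v : ℂ) : ‖Complex.cos v‖ ≤ Real.exp ‖v‖ := by
  rw [Complex.cos]
  have h1 : ‖Complex.exp (v * Complex.I)‖ ≤ Real.exp ‖v‖ := by
    rw [Complex.norm_exp]
    apply Real.exp_le_exp.2
    calc (v * Complex.I).re ≤ |(v * Complex.I).re| := le_abs_self _
      _ ≤ ‖v * Complex.I‖ := Complex.abs_re_le_norm _
      _ = ‖v‖ := by simp
  have h2 : ‖Complex.exp (-v * Complex.I)‖ ≤ Real.exp ‖v‖ := by
    rw [Complex.norm_exp]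
    apply Real.exp_le_exp.2
    calc (-v * Complex.I).re ≤ |(-v * Complex.I).re| := le_abs_self _
      _ ≤ ‖-v * Complex.I‖ := Complex.abs_re_le_norm _
      _ = ‖v‖ := by simp
  calc ‖(Complex.exp (v * Complex.I) + Complex.exp (-v * Complex.I)) / 2‖
      = ‖Complex.exp (v * Complex.I) + Complex.exp (-v * Complex.I)‖ / 2 := by
        simp [norm_div]
    _ ≤ (Real.exp ‖v‖ + Real.exp ‖v‖) / 2 := by
        gcongr
        exact (norm_add_le _ _).trans (by linarith)
    _ = Real.exp ‖v‖ := by ring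


theorem psi_even_odd_split (δ : ℝ) (hδ : 0 < δ) (z : ℂ) :
    psiTheta (Complex.I + (δ : ℂ)) z =
      2 * psiTheta (4 * (δ : ℂ))
          (((Complex.I + (δ : ℂ)) ^ (1 / 2 : ℂ) / ((δ : ℂ) ^ (1 / 2 : ℂ))) * z) -
        psiTheta (δ : ℂ)
          (((Complex.I + (δ : ℂ)) ^ (1 / 2 : ℂ) / ((δ : ℂ) ^ (1 / 2 : ℂ))) * z) := by
  have hπ := Real.pi_pos
  set w : ℂ := (Complex.I + (δ : ℂ)) ^ (1 / 2 : ℂ) / ((δ : ℂ) ^ (1 / 2 : ℂ)) with hw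
  set c : ℂ := ((π : ℂ) * (δ : ℂ)) ^ (1 / 2 : ℂ) with hc
  set W : ℂ := w * z with hW
  set f : ℕ → ℂ := fun n =>
    Complex.exp (-(π : ℂ) * ((n : ℂ) + 1) ^ 2 * (δ : ℂ)) *
      Complex.cos (c * ((n : ℂ) + 1) * W) with hf_def
  -- real descriptions of the square roots
  have hcR : c = ((Real.sqrt (π * δ) : ℝ) : ℂ) := by
    rw [hc, show (π : ℂ) * (δ : ℂ) = (((π * δ : ℝ)) : ℂ) by push_cast; ring,
      ofReal_half_pow (by positivity)]
  have hdR : ((δ : ℂ)) ^ (1 / 2 : ℂ) = ((Real.sqrt δ : ℝ) : ℂ) :=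
    ofReal_half_pow hδ.le
  have hD0 : ((δ : ℂ)) ^ (1 / 2 : ℂ) ≠ 0 := by
    rw [hdR]
    simpa using (Real.sqrt_pos.2 hδ).ne'
  have h4 : ((π : ℂ) * (4 * (δ : ℂ))) ^ (1 / 2 : ℂ) = 2 * c := by
    rw [show (π : ℂ) * (4 * (δ : ℂ)) = (((2 ^ 2 * (π * δ) : ℝ)) : ℂ) by push_cast; ring,
      ofReal_half_pow (by positivity), Real.sqrt_mul (by positivity),
      Real.sqrt_sq (by norm_num), hcR]
    push_cast
    ring
  -- the key square-root identity
  have hA : ((π : ℂ) * (Complex.I + (δ : ℂ))) ^ (1 / 2 : ℂ) = c * w := by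
    set A : ℂ := ((π : ℂ) * (Complex.I + (δ : ℂ))) ^ (1 / 2 : ℂ) with hAdef
    set C : ℂ := (Complex.I + (δ : ℂ)) ^ (1 / 2 : ℂ) with hCdef
    have hsq : (A * ((δ : ℂ) ^ (1 / 2 : ℂ))) ^ 2 = (c * C) ^ 2 := by
      rw [mul_pow, mul_pow, sq_half, sq_half, sq_half, sq_half]
      ring
    have hre1 : 0 < (A * ((δ : ℂ) ^ (1 / 2 : ℂ))).re := by
      rw [hdR]
      have h1 : 0 < A.re := by
        apply re_half_pos
        simp only [Complex.mul_re, Complex.add_re, Complex.I_re, Complex.ofReal_re,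
          Complex.add_im, Complex.I_im, Complex.ofReal_im, Complex.mul_im]
        nlinarith [Real.sqrt_pos.2 hδ]
      have := Real.sqrt_pos.2 hδ
      simp only [Complex.mul_re, Complex.ofReal_re, Complex.ofReal_im, mul_zero, sub_zero]
      positivity
    have hre2 : 0 < (c * C).re := by
      rw [hcR, mul_comm]
      have h1 : 0 < C.re := by
        apply re_half_pos
        simp [hδ]
      have := Real.sqrt_pos.2 (show 0 < π * δ by positivity)
      simp only [Complex.mul_re, Complex.ofReal_re, Complex.ofReal_im, mul_zero, sub_zero]
      positivity
    rcases sq_eq_sq_iff_eq_or_eq_neg.1 hsq with h | h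
    · have h2 : A * ((δ : ℂ) ^ (1 / 2 : ℂ)) / ((δ : ℂ) ^ (1 / 2 : ℂ)) =
          c * (C / ((δ : ℂ) ^ (1 / 2 : ℂ))) := by rw [h]; ring
      rwa [mul_div_cancel_right₀ _ hD0] at h2
    · exfalso
      rw [h] at hre1
      simp only [Complex.neg_re] at hre1
      linarith
  -- parity of the exponential factor
  have hexp : ∀ n : ℕ,
      Complex.exp (-(π : ℂ) * ((n : ℂ) + 1) ^ 2 * (Complex.I + (δ : ℂ))) =
        (-1 : ℂ) ^ (n + 1) * Complex.exp (-(π : ℂ) * ((n : ℂ) + 1) ^ 2 * (δ : ℂ)) := by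
    intro n
    have harg : -(π : ℂ) * ((n : ℂ) + 1) ^ 2 * (Complex.I + (δ : ℂ)) =
        (((n + 1) ^ 2 : ℕ) : ℂ) * (-(π : ℂ) * Complex.I) +
          -(π : ℂ) * ((n : ℂ) + 1) ^ 2 * (δ : ℂ) := by
      push_cast
      ring
    have hmpi : Complex.exp (-(π : ℂ) * Complex.I) = -1 := by
      rw [neg_mul, Complex.exp_neg, Complex.exp_pi_mul_I]
      norm_num
    rw [harg, Complex.exp_add, Complex.exp_nat_mul, hmpi]
    congr 1
    rw [pow_two (n + 1), pow_mul]
    rcases Nat.even_or_odd (n + 1) with h | h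
    · rw [h.neg_one_pow, one_pow]
    · rw [h.neg_one_pow, h.neg_one_pow]
  -- summability
  have hnorm : Summable fun n : ℕ => ‖f n‖ := by
    set K : ℝ := ‖c * W‖ with hK
    have hbound : ∀ n : ℕ,
        ‖f n‖ ≤ Real.exp (-(π * δ) * ((n : ℝ) + 1) ^ 2 + K * ((n : ℝ) + 1)) := by
      intro n
      rw [hf_def]
      simp only [norm_mul]
      have h1 : ‖Complex.exp (-(π : ℂ) * ((n : ℂ) + 1) ^ 2 * (δ : ℂ))‖ =
          Real.exp (-(π * δ) * ((n : ℝ) + 1) ^ 2) := by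
        rw [show -(π : ℂ) * ((n : ℂ) + 1) ^ 2 * (δ : ℂ) =
            (((-(π * δ) * ((n : ℝ) + 1) ^ 2 : ℝ)) : ℂ) by push_cast; ring]
        rw [Complex.norm_exp, Complex.ofReal_re]
      have h2 : ‖Complex.cos (c * ((n : ℂ) + 1) * W)‖ ≤ Real.exp (K * ((n : ℝ) + 1)) := by
        refine (norm_cos_le' _).trans ?_
        apply Real.exp_le_exp.2
        have : ‖c * ((n : ℂ) + 1) * W‖ = K * ((n : ℝ) + 1) := by
          rw [hK]
          rw [show c * ((n : ℂ) + 1) * W = (c * W) * (((n : ℝ) + 1 : ℝ) : ℂ) by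
            push_cast; ring]
          rw [norm_mul]
          congr 1
          simp only [Complex.norm_real, Real.norm_eq_abs]
          rw [_root_.abs_of_nonneg (by positivity : (0:ℝ) ≤ (n : ℝ) + 1)]
        exact this.le
      calc ‖Complex.exp (-(π : ℂ) * ((n : ℂ) + 1) ^ 2 * (δ : ℂ))‖ *
            ‖Complex.cos (c * ((n : ℂ) + 1) * W)‖
          ≤ Real.exp (-(π * δ) * ((n : ℝ) + 1) ^ 2) * Real.exp (K * ((n : ℝ) + 1)) := by
            rw [h1]; exact mul_le_mul_of_nonneg_left h2 (Real.exp_pos _).le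
        _ = Real.exp (-(π * δ) * ((n : ℝ) + 1) ^ 2 + K * ((n : ℝ) + 1)) := by
            rw [← Real.exp_add]
    apply Summable.of_norm_bounded_eventually_nat (g := fun n => Real.exp (-1) ^ n)
      (summable_geometric_of_lt_one (Real.exp_pos _).le
        (Real.exp_lt_one_iff.2 (by norm_num : (-1 : ℝ) < 0)))
    rw [Filter.eventually_atTop]
    refine ⟨⌈(K + 1) / (π * δ)⌉₊, fun n hn => ?_⟩
    have hn' : (K + 1) / (π * δ) ≤ (n : ℝ) :=
      (Nat.ceil_le.1 hn).trans' le_rfl |>.trans_eq rfl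
    have hπδ : 0 < π * δ := by positivity
    have h3 : K + 1 ≤ π * δ * ((n : ℝ) + 1) := by
      rw [div_le_iff₀ hπδ] at hn'
      nlinarith
    have h4 : -(π * δ) * ((n : ℝ) + 1) ^ 2 + K * ((n : ℝ) + 1) ≤ -(n : ℝ) := by
      nlinarith [Nat.cast_nonneg (α := ℝ) n]
    rw [norm_norm]
    calc ‖f n‖ ≤ Real.exp (-(π * δ) * ((n : ℝ) + 1) ^ 2 + K * ((n : ℝ) + 1)) := hbound n
      _ ≤ Real.exp (-(n : ℝ)) := Real.exp_le_exp.2 h4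
      _ = Real.exp (-1) ^ n := by
          rw [← Real.exp_nat_mul]
          congr 1
          ring
  have hf : Summable f := hnorm.of_norm
  have he : Summable fun n : ℕ => (-1 : ℂ) ^ (n + 1) * f n := by
    apply Summable.of_norm
    have : (fun n : ℕ => ‖(-1 : ℂ) ^ (n + 1) * f n‖) = fun n : ℕ => ‖f n‖ := by
      funext n
      simp [norm_mul]
    rw [this]
    exact hnorm
  have hodd : Summable fun k : ℕ => f (2 * k + 1) :=
    hf.comp_injective (fun a b h => by omega)
  -- tsum identities
  have hL : psiTheta (Complex.I + (δ : ℂ)) z = ∑' n : ℕ, (-1 : ℂ) ^ (n + 1) * f n := by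
    rw [psiTheta]
    apply tsum_congr
    intro n
    rw [hexp n, hA, hf_def]
    rw [show c * w * ((n : ℂ) + 1) * z = c * ((n : ℂ) + 1) * W by rw [hW]; ring]
    ring
  have hM : psiTheta (4 * (δ : ℂ)) W = ∑' k : ℕ, f (2 * k + 1) := by
    rw [psiTheta]
    apply tsum_congr
    intro n
    rw [h4, hf_def]
    simp only []
    congr 1
    · congr 1
      push_cast
      ring
    · congr 1
      push_cast
      ring
  have hS : psiTheta (δ : ℂ) W = ∑' n : ℕ, f n := by
    rw [psiTheta]
  have hinj : Function.Injective (fun k : ℕ => 2 * k + 1) := fun a b h => by simp only [] at h; omega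
  have key : (∑' n : ℕ, (-1 : ℂ) ^ (n + 1) * f n) + ∑' n : ℕ, f n =
      2 * ∑' k : ℕ, f (2 * k + 1) := by
    have hsupp : Function.support (fun n : ℕ => (-1 : ℂ) ^ (n + 1) * f n + f n) ⊆
        Set.range (fun k : ℕ => 2 * k + 1) := by
      intro n hn
      rcases Nat.even_or_odd n with h | h
      · exfalso
        apply hn
        have h1 : ((-1 : ℂ)) ^ (n + 1) = -1 := (h.add_one).neg_one_pow
        simp only [h1]
        ring
      · obtain ⟨k, hk⟩ := h
        refine ⟨k, ?_⟩
        show 2 * k + 1 = n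
        omega
    calc (∑' n : ℕ, (-1 : ℂ) ^ (n + 1) * f n) + ∑' n : ℕ, f n
        = ∑' n : ℕ, ((-1 : ℂ) ^ (n + 1) * f n + f n) := (Summable.tsum_add he hf).symm
      _ = ∑' k : ℕ, ((-1 : ℂ) ^ ((2 * k + 1) + 1) * f (2 * k + 1) + f (2 * k + 1)) :=
          (hinj.tsum_eq hsupp).symm
      _ = ∑' k : ℕ, 2 * f (2 * k + 1) := by
          apply tsum_congr
          intro k
          rw [show 2 * k + 1 + 1 = 2 * (k + 1) by ring, (even_two_mul (k + 1)).neg_one_pow]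
          ring
      _ = 2 * ∑' k : ℕ, f (2 * k + 1) := tsum_mul_left
  rw [hL, hM, hS]
  linear_combination key
end
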